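/- Let Ω ⊂ ℝ^d and φ = χ_A for measurable A ⊂ Ω. If u* minimizes v ↦ −∫_Ω φ |e^{(τ/2)Δ} v|² dx over unit-norm v ∈ L²(Ω), then u* does not change sign: either u* ≥ 0 a.e. or u* ≤ 0 a.e. -/

import Mathlib

open MeasureTheory Real

noncomputable def heatKernel (d : ℕ) (t : ℝ) (x : EuclideanSpace ℝ (Fin d)) : ℝ :=
  (4 * π * t) ^ (-(d : ℝ) / 2) * Real.exp (-‖x‖ ^ 2 / (4 * t))

noncomputable def heatConv (d : ℕ) (t : ℝ) (u : EuclideanSpace ℝ (Fin d) → ℝ)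
    (x : EuclideanSpace ℝ (Fin d)) : ℝ :=
  ∫ y, heatKernel d t (x - y) * u y

lemma gaussian_integrable {d : ℕ} {b : ℝ} (hb : 0 < b) :
    Integrable (fun x : EuclideanSpace ℝ (Fin d) => Real.exp (-b * ‖x‖ ^ 2)) := by
  have h := (GaussianFourier.integrable_cexp_neg_mul_sq_norm_add (V := EuclideanSpace ℝ (Fin d))
    (b := (b:ℂ)) (by simpa using hb) 0 0).norm
  have heq : ∀ x : EuclideanSpace ℝ (Fin d),
      ‖Complex.exp (-(b:ℂ) * ‖x‖ ^ 2 + 0 * (inner ℝ (0 : EuclideanSpace ℝ (Fin d)) x : ℝ))‖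
        = Real.exp (-b * ‖x‖ ^ 2) := by
    intro x
    rw [Complex.norm_exp]
    congr 1
    simp [Complex.add_re, Complex.mul_re, ← Complex.ofReal_pow]
  simpa only [heq] using h

lemma heatKernel_pos {d : ℕ} {t : ℝ} (ht : 0 < t) (x : EuclideanSpace ℝ (Fin d)) :
    0 < heatKernel d t x := by
  unfold heatKernel
  have : (0:ℝ) < 4 * π * t := by positivity
  positivity

lemma heatKernel_continuous (d : ℕ) (t : ℝ) : Continuous (heatKernel d t) := by
  unfold heatKernel
  fun_prop

lemma heatKernel_eq {d : ℕ} {t : ℝ} (x : EuclideanSpace ℝ (Fin d)) :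
    heatKernel d t x = (4 * π * t) ^ (-(d : ℝ) / 2) * Real.exp (-(1/(4*t)) * ‖x‖ ^ 2) := by
  unfold heatKernel
  rw [show -‖x‖ ^ 2 / (4 * t) = -(1/(4*t)) * ‖x‖ ^ 2 by ring]

lemma heatKernel_integrable {d : ℕ} {t : ℝ} (ht : 0 < t) :
    Integrable (heatKernel d t) := by
  have e : heatKernel d t = fun x => (4 * π * t) ^ (-(d : ℝ) / 2)
      * Real.exp (-(1/(4*t)) * ‖x‖ ^ 2) := funext heatKernel_eq
  rw [e]
  exact (gaussian_integrable (by positivity)).const_mul _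

lemma heatKernel_sq_eq {d : ℕ} {t : ℝ} (x : EuclideanSpace ℝ (Fin d)) :
    heatKernel d t x ^ 2 = ((4 * π * t) ^ (-(d : ℝ) / 2)) ^ 2
      * Real.exp (-(1/(2*t)) * ‖x‖ ^ 2) := by
  unfold heatKernel
  rw [mul_pow, pow_two (Real.exp _), ← Real.exp_add]
  congr 2
  ring

lemma heatKernel_sq_integrable {d : ℕ} {t : ℝ} (ht : 0 < t) :
    Integrable (fun x => heatKernel d t x ^ 2) := by
  have e : (fun x : EuclideanSpace ℝ (Fin d) => heatKernel d t x ^ 2)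
      = fun x => ((4 * π * t) ^ (-(d : ℝ) / 2)) ^ 2
        * Real.exp (-(1/(2*t)) * ‖x‖ ^ 2) := funext heatKernel_sq_eq
  rw [e]
  exact (gaussian_integrable (by positivity)).const_mul _


open scoped ENNReal NNReal

lemma conv_memL2 {d : ℕ} {K u : EuclideanSpace ℝ (Fin d) → ℝ}
    (hKcont : Continuous K) (hKnonneg : ∀ x, 0 ≤ K x) (hKint : Integrable K)
    (hu : MemLp u 2 volume) :
    MemLp (fun x => ∫ y, K (x - y) * u y) 2 volume := by
  obtain ⟨hu_sm, hu_lt⟩ := hu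
  set w := hu_sm.mk u with hw_def
  have hw : StronglyMeasurable w := hu_sm.stronglyMeasurable_mk
  have huw : u =ᵐ[volume] w := hu_sm.ae_eq_mk
  have hFeq : ∀ x, (∫ y, K (x - y) * u y) = ∫ y, K (x - y) * w y := fun x =>
    integral_congr_ae (huw.mono fun y hy => by dsimp only; rw [hy])
  have hFsm : StronglyMeasurable fun x => ∫ y, K (x - y) * w y := by
    apply StronglyMeasurable.integral_prod_right'
      (f := fun p : (EuclideanSpace ℝ (Fin d)) × (EuclideanSpace ℝ (Fin d)) => K (p.1 - p.2) * w p.2)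
    exact ((hKcont.comp (continuous_fst.sub continuous_snd)).stronglyMeasurable).mul
      (hw.comp_measurable measurable_snd)
  have hFmeas : AEStronglyMeasurable (fun x => ∫ y, K (x - y) * u y) volume := by
    have : (fun x => ∫ y, K (x - y) * u y) = fun x => ∫ y, K (x - y) * w y := funext hFeq
    rw [this]; exact hFsm.aestronglyMeasurable
  -- ENNReal versions
  set K' : EuclideanSpace ℝ (Fin d) → ℝ≥0∞ := fun z => ENNReal.ofReal (K z) with hK'_def
  have hK'meas : Measurable K' := hKcont.measurable.ennreal_ofReal
  set e : EuclideanSpace ℝ (Fin d) → ℝ≥0∞ := fun y => (‖w y‖₊ : ℝ≥0∞) with he_def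
  have he_meas : Measurable e := hw.measurable.nnnorm.coe_nnreal_ennreal
  set IK : ℝ≥0∞ := ∫⁻ z, K' z with hIK_def
  have hIK : IK ≠ ⊤ := by
    have h1 : IK = ∫⁻ z, (‖K z‖₊ : ℝ≥0∞) := by
      exact lintegral_congr fun z => (Real.enorm_eq_ofReal (hKnonneg z)).symm
    rw [h1]
    exact hKint.hasFiniteIntegral.ne
  have hIKsub : ∀ x, (∫⁻ y, K' (x - y)) = IK := fun x =>
    (Measure.measurePreserving_sub_left volume x).lintegral_comp hK'meas
  have hIKsub' : ∀ y, (∫⁻ x, K' (x - y)) = IK := fun y =>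
    (measurePreserving_sub_right volume y).lintegral_comp hK'meas
  -- pointwise bound
  have step2 : ∀ x, (‖∫ y, K (x - y) * u y‖₊ : ℝ≥0∞) ^ (2:ℝ)
      ≤ IK * ∫⁻ y, K' (x - y) * e y ^ (2:ℝ) := by
    intro x
    have step0 : (‖∫ y, K (x - y) * u y‖₊ : ℝ≥0∞) ≤ ∫⁻ y, K' (x - y) * e y := by
      rw [hFeq x]
      refine (enorm_integral_le_lintegral_enorm _).trans (le_of_eq ?_)
      refine lintegral_congr fun y => ?_
      rw [enorm_mul, Real.enorm_eq_ofReal (hKnonneg _)]; rfl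
    have step1 : (∫⁻ y, K' (x - y) * e y)
        ≤ IK ^ (1/2:ℝ) * (∫⁻ y, K' (x - y) * e y ^ (2:ℝ)) ^ (1/2:ℝ) := by
      have hconj : Real.HolderConjugate 2 2 := ⟨by norm_num, by norm_num, by norm_num⟩
      have hf : AEMeasurable (fun y => K' (x - y) ^ (1/2:ℝ)) volume :=
        ((hK'meas.comp (measurable_const.sub measurable_id)).pow_const _).aemeasurable
      have hg : AEMeasurable (fun y => K' (x - y) ^ (1/2:ℝ) * e y) volume :=
        (((hK'meas.comp (measurable_const.sub measurable_id)).pow_const _).mul he_meas).aemeasurable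
      have := ENNReal.lintegral_mul_le_Lp_mul_Lq volume hconj hf hg
      calc (∫⁻ y, K' (x - y) * e y)
          = ∫⁻ y, ((fun y => K' (x - y) ^ (1/2:ℝ)) * fun y => K' (x - y) ^ (1/2:ℝ) * e y) y := by
            refine lintegral_congr fun y => ?_
            simp only [Pi.mul_apply]
            rw [← mul_assoc, ← ENNReal.rpow_add_of_nonneg _ _ (by norm_num) (by norm_num)]
            norm_num
        _ ≤ (∫⁻ y, (K' (x - y) ^ (1/2:ℝ)) ^ (2:ℝ)) ^ (1/2:ℝ)
            * (∫⁻ y, (K' (x - y) ^ (1/2:ℝ) * e y) ^ (2:ℝ)) ^ (1/2:ℝ) := this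
        _ = IK ^ (1/2:ℝ) * (∫⁻ y, K' (x - y) * e y ^ (2:ℝ)) ^ (1/2:ℝ) := by
            congr 1
            · congr 1
              rw [← hIKsub x]
              refine lintegral_congr fun y => ?_
              rw [← ENNReal.rpow_mul]; norm_num
            · congr 1
              refine lintegral_congr fun y => ?_
              rw [ENNReal.mul_rpow_of_nonneg _ _ (by norm_num : (0:ℝ) ≤ 2), ← ENNReal.rpow_mul]
              norm_num
    calc (‖∫ y, K (x - y) * u y‖₊ : ℝ≥0∞) ^ (2:ℝ)
        ≤ (IK ^ (1/2:ℝ) * (∫⁻ y, K' (x - y) * e y ^ (2:ℝ)) ^ (1/2:ℝ)) ^ (2:ℝ) :=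
          ENNReal.rpow_le_rpow (step0.trans step1) (by norm_num)
      _ = IK * ∫⁻ y, K' (x - y) * e y ^ (2:ℝ) := by
          rw [ENNReal.mul_rpow_of_nonneg _ _ (by norm_num : (0:ℝ) ≤ 2),
            ← ENNReal.rpow_mul, ← ENNReal.rpow_mul]
          norm_num
  -- integrate the bound
  have he2 : (∫⁻ y, e y ^ (2:ℝ)) < ⊤ := by
    have h1 : (∫⁻ y, e y ^ (2:ℝ)) = ∫⁻ y, (‖u y‖₊ : ℝ≥0∞) ^ (2:ℝ) := by
      refine lintegral_congr_ae (huw.mono fun y hy => ?_)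
      rw [he_def]; simp [hy]
    rw [h1]
    have := lintegral_rpow_enorm_lt_top_of_eLpNorm_lt_top (p := 2) (f := u) two_ne_zero
      (by norm_num) hu_lt
    simpa [enorm_eq_nnnorm] using this
  have total : (∫⁻ x, (‖∫ y, K (x - y) * u y‖₊ : ℝ≥0∞) ^ (2:ℝ))
      ≤ IK * (IK * ∫⁻ y, e y ^ (2:ℝ)) := by
    calc (∫⁻ x, (‖∫ y, K (x - y) * u y‖₊ : ℝ≥0∞) ^ (2:ℝ))
        ≤ ∫⁻ x, IK * ∫⁻ y, K' (x - y) * e y ^ (2:ℝ) := lintegral_mono step2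
      _ = IK * ∫⁻ x, ∫⁻ y, K' (x - y) * e y ^ (2:ℝ) := lintegral_const_mul' _ _ hIK
      _ = IK * ∫⁻ y, ∫⁻ x, K' (x - y) * e y ^ (2:ℝ) := by
          rw [lintegral_lintegral_swap]
          exact ((hK'meas.comp (measurable_fst.sub measurable_snd)).mul
            ((he_meas.pow_const _).comp measurable_snd)).aemeasurable
      _ = IK * ∫⁻ y, IK * e y ^ (2:ℝ) := by
          congr 1
          refine lintegral_congr fun y => ?_
          rw [lintegral_mul_const (e y ^ (2:ℝ)) (f := fun x => K' (x - y))
            (hK'meas.comp (measurable_id.sub measurable_const)), hIKsub' y]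
      _ = IK * (IK * ∫⁻ y, e y ^ (2:ℝ)) := by rw [lintegral_const_mul' _ _ hIK]
  refine ⟨hFmeas, ?_⟩
  rw [eLpNorm_eq_lintegral_rpow_enorm_toReal two_ne_zero (by norm_num)]
  refine ENNReal.rpow_lt_top_of_nonneg (by positivity) ?_
  have h2r : (2:ℝ≥0∞).toReal = (2:ℝ) := by norm_num
  rw [h2r]
  exact (total.trans_lt
    (ENNReal.mul_ne_top hIK (ENNReal.mul_ne_top hIK he2.ne)).lt_top).ne


theorem stmt15 {d : ℕ} (Ω A : Set (EuclideanSpace ℝ (Fin d)))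
    (hA : MeasurableSet A) (hAΩ : A ⊆ Ω) (hApos : 0 < volume A)
    (τ : ℝ) (hτ : 0 < τ)
    (ustar : EuclideanSpace ℝ (Fin d) → ℝ) (hum : MemLp ustar 2 volume)
    (hnorm : ∫ x, (ustar x) ^ 2 = 1)
    (hmin : ∀ v : EuclideanSpace ℝ (Fin d) → ℝ, MemLp v 2 volume →
      (∫ x, (v x) ^ 2) = 1 →
      -(∫ x in A, (heatConv d (τ / 2) ustar x) ^ 2) ≤
        -(∫ x in A, (heatConv d (τ / 2) v x) ^ 2)) :
    (∀ᵐ x, 0 ≤ ustar x) ∨ (∀ᵐ x, ustar x ≤ 0) := by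
  by_contra hcon
  push_neg at hcon
  obtain ⟨h1, h2⟩ := hcon
  rw [frequently_ae_iff] at h1 h2
  -- h1 : volume {x | ustar x < 0} ≠ 0, h2 : volume {x | 0 < ustar x} ≠ 0
  have ht : 0 < τ / 2 := by linarith
  have hKpos := fun x => heatKernel_pos (d := d) ht x
  -- membership of translated kernel in L²
  have hKxmem : ∀ x : EuclideanSpace ℝ (Fin d),
      MemLp (fun y => heatKernel d (τ/2) (x - y)) 2 volume := by
    intro x
    refine (memLp_two_iff_integrable_sq ?_).2 ?_
    · exact ((heatKernel_continuous d (τ/2)).comp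
        (continuous_const.sub continuous_id)).aestronglyMeasurable
    · exact ((Measure.measurePreserving_sub_left volume x).integrable_comp_emb
        (MeasurableEquiv.subLeft x).measurableEmbedding).2 (heatKernel_sq_integrable ht)
  have hprod : ∀ v : EuclideanSpace ℝ (Fin d) → ℝ, MemLp v 2 volume →
      ∀ x, Integrable (fun y => heatKernel d (τ/2) (x - y) * v y) := by
    intro v hv x
    exact memLp_one_iff_integrable.mp
      (hv.smul (hKxmem x) (p := 2) (q := 2) (r := 1)
        (hpqr := ⟨by simp [one_div, ENNReal.inv_two_add_inv_two]⟩))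
  set ut : EuclideanSpace ℝ (Fin d) → ℝ := fun x => |ustar x| with hut_def
  have hutm : MemLp ut 2 volume := hum.abs
  have hutnorm : ∫ x, (ut x) ^ 2 = 1 := by simpa [hut_def, sq_abs] using hnorm
  -- pointwise strict inequalities
  have hlt : ∀ x, heatConv d (τ/2) ustar x < heatConv d (τ/2) ut x := by
    intro x
    have hi1 := hprod ustar hum x
    have hi2 := hprod ut hutm x
    have hpos' : 0 < ∫ y, heatKernel d (τ/2) (x - y) * (ut y - ustar y) := by
      have hsupp : Function.support (fun y => heatKernel d (τ/2) (x - y) * (ut y - ustar y))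
          = {y | ustar y < 0} := by
        ext y
        simp only [Function.mem_support, Set.mem_setOf_eq, mul_ne_zero_iff, hut_def]
        constructor
        · rintro ⟨-, h⟩
          by_contra hy
          push_neg at hy
          exact h (by rw [abs_of_nonneg hy]; ring)
        · intro hy
          exact ⟨(hKpos _).ne', sub_ne_zero.2
            (lt_of_lt_of_le hy (abs_nonneg _)).ne'⟩
      rw [integral_pos_iff_support_of_nonneg]
      · rw [hsupp]
        exact pos_iff_ne_zero.mpr h1
      · intro y
        exact mul_nonneg (hKpos _).le (sub_nonneg.2 (le_abs_self _))
      · have : (fun y => heatKernel d (τ/2) (x - y) * (ut y - ustar y))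
            = fun y => heatKernel d (τ/2) (x - y) * ut y
              - heatKernel d (τ/2) (x - y) * ustar y := funext fun y => by ring
        rw [this]
        exact hi2.sub hi1
    have heq2 : ∫ y, heatKernel d (τ/2) (x - y) * (ut y - ustar y)
        = heatConv d (τ/2) ut x - heatConv d (τ/2) ustar x := by
      unfold heatConv
      rw [← integral_sub hi2 hi1]
      exact integral_congr_ae (Filter.Eventually.of_forall fun y => by ring)
    rw [heq2] at hpos'
    linarith
  have hgt : ∀ x, -heatConv d (τ/2) ut x < heatConv d (τ/2) ustar x := by
    intro x
    have hi1 := hprod ustar hum x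
    have hi2 := hprod ut hutm x
    have hpos' : 0 < ∫ y, heatKernel d (τ/2) (x - y) * (ut y + ustar y) := by
      have hsupp : Function.support (fun y => heatKernel d (τ/2) (x - y) * (ut y + ustar y))
          = {y | 0 < ustar y} := by
        ext y
        simp only [Function.mem_support, Set.mem_setOf_eq, mul_ne_zero_iff, hut_def]
        constructor
        · rintro ⟨-, h⟩
          by_contra hy
          push_neg at hy
          exact h (by rw [abs_of_nonpos hy]; ring)
        · intro hy
          refine ⟨(hKpos _).ne', ?_⟩
          have : 0 < |ustar y| + ustar y := by
            have := abs_nonneg (ustar y); linarith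
          exact this.ne'
      rw [integral_pos_iff_support_of_nonneg]
      · rw [hsupp]
        exact pos_iff_ne_zero.mpr h2
      · intro y
        have : -ustar y ≤ |ustar y| := neg_le_abs _
        exact mul_nonneg (hKpos _).le (by linarith)
      · have : (fun y => heatKernel d (τ/2) (x - y) * (ut y + ustar y))
            = fun y => heatKernel d (τ/2) (x - y) * ut y
              + heatKernel d (τ/2) (x - y) * ustar y := funext fun y => by ring
        rw [this]
        exact hi2.add hi1
    have heq2 : ∫ y, heatKernel d (τ/2) (x - y) * (ut y + ustar y)
        = heatConv d (τ/2) ut x + heatConv d (τ/2) ustar x := by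
      unfold heatConv
      rw [← integral_add hi2 hi1]
      exact integral_congr_ae (Filter.Eventually.of_forall fun y => by ring)
    rw [heq2] at hpos'
    linarith
  have hsq : ∀ x, heatConv d (τ/2) ustar x ^ 2 < heatConv d (τ/2) ut x ^ 2 :=
    fun x => sq_lt_sq' (hgt x) (hlt x)
  -- L² membership of convolutions
  have hKcont := heatKernel_continuous d (τ/2)
  have hKnn : ∀ x : EuclideanSpace ℝ (Fin d), 0 ≤ heatKernel d (τ/2) x := fun x => (hKpos x).le
  have hKint := heatKernel_integrable (d := d) ht
  have hcu_mem : MemLp (heatConv d (τ/2) ustar) 2 volume := conv_memL2 hKcont hKnn hKint hum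
  have hcut_mem : MemLp (heatConv d (τ/2) ut) 2 volume := conv_memL2 hKcont hKnn hKint hutm
  have Int1 : IntegrableOn (fun x => heatConv d (τ/2) ustar x ^ 2) A volume :=
    hcu_mem.integrable_sq.integrableOn
  have Int2 : IntegrableOn (fun x => heatConv d (τ/2) ut x ^ 2) A volume :=
    hcut_mem.integrable_sq.integrableOn
  have le1 : ∫ x in A, heatConv d (τ/2) ut x ^ 2 ≤ ∫ x in A, heatConv d (τ/2) ustar x ^ 2 := by
    have := hmin ut hutm hutnorm
    linarith
  have hstrict : 0 < ∫ x in A, (heatConv d (τ/2) ut x ^ 2 - heatConv d (τ/2) ustar x ^ 2) := by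
    have hsupp : Function.support
        (fun x => heatConv d (τ/2) ut x ^ 2 - heatConv d (τ/2) ustar x ^ 2) = Set.univ :=
      Set.eq_univ_of_forall fun x => sub_ne_zero.2 (hsq x).ne'
    rw [integral_pos_iff_support_of_nonneg]
    · rw [hsupp]
      rwa [Measure.restrict_apply_univ]
    · intro x
      exact sub_nonneg.2 (hsq x).le
    · exact Int2.sub Int1
  rw [integral_sub Int2 Int1] at hstrict
  linarith
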